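/- Let p > q > 0 be reals, n ≥ 2, and A as above. Any vector of the form q·e_i ± p·e_j with i ≠ j that is not a column of A does not belong to the lattice A·ℤ^n. -/

import Mathlib

/-- The matrix `A` with `q` on the diagonal, `-p` on the subdiagonal,
`p` in the top-right corner (entry `(1,n)`), and `0` elsewhere. -/
def tilingMatrix (p q : ℝ) (n : ℕ) : Matrix (Fin n) (Fin n) ℝ :=
  Matrix.of fun i j =>
    if (i : ℕ) = (j : ℕ) then q
    else if (i : ℕ) = (j : ℕ) + 1 then -p
    else if (i : ℕ) = 0 ∧ (j : ℕ) = n - 1 then p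
    else 0

/-- The lattice `A·ℤⁿ` of integer linear combinations of the columns of `A`. -/
def latticeA (p q : ℝ) (n : ℕ) : Set (Fin n → ℝ) :=
  {x | ∃ z : Fin n → ℤ, x = (tilingMatrix p q n).mulVec fun i => (z i : ℝ)}

section Helpers
variable (p q : ℝ) (n : ℕ) [NeZero n]

lemma tmAux_predval (hn : 2 ≤ n) (a : Fin n) :
    (a-1).val = if a.val = 0 then n - 1 else a.val - 1 := by
  have h1 : ((1:Fin n)).val = 1 := (Fin.val_one' n).trans (Nat.mod_eq_of_lt (by omega))
  rw [Fin.sub_def, h1]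
  show (n - 1 + a.val) % n = _
  have := a.isLt
  split <;> rename_i h
  · rw [h]; rw [Nat.add_zero, Nat.mod_eq_of_lt (by omega)]
  · have h2 : n - 1 + a.val = n + (a.val - 1) := by omega
    rw [h2, Nat.add_mod_left, Nat.mod_eq_of_lt (by omega)]

lemma tmAux_entry (hn : 2 ≤ n) (l k : Fin n) :
    tilingMatrix p q n l k =
      (if k = l then q else 0) +
        (if k = l - 1 then (if (l:ℕ) = 0 then p else -p) else 0) := by
  have hk := k.isLt; have hl := l.isLt
  have hpred := tmAux_predval n hn l
  simp only [tilingMatrix, Matrix.of_apply, Fin.ext_iff, hpred]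
  split_ifs <;> (first | ring1 | (exfalso; omega))

lemma tmAux_mv (hn : 2 ≤ n) (z : Fin n → ℝ) (l : Fin n) :
    (tilingMatrix p q n).mulVec z l
      = q * z l + (if (l:ℕ) = 0 then p else -p) * z (l-1) := by
  simp only [Matrix.mulVec, dotProduct, tmAux_entry p q n hn l, add_mul, ite_mul,
    zero_mul, Finset.sum_add_distrib, Finset.sum_ite_eq', Finset.mem_univ, if_true]

end Helpers

lemma tmAux_qpFacts (p q : ℝ) (hq : 0 < q) (hqp : q < p) (a b : ℤ) (ha : 0 ≤ a)
    (h : q * a = p * b) :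
    0 ≤ b ∧ (b = 0 → a = 0) ∧ (a = 0 → b = 0) ∧ (1 ≤ b → b + 1 ≤ a) ∧
      (a ≤ b → a = 0 ∧ b = 0) := by
  have hp : 0 < p := hq.trans hqp
  have har : (0:ℝ) ≤ a := by exact_mod_cast ha
  have hb : 0 ≤ b := by
    have : (0:ℝ) ≤ b := by nlinarith
    exact_mod_cast this
  have h2 : b = 0 → a = 0 := by
    intro hb0
    have hbr : (b:ℝ) = 0 := by exact_mod_cast hb0
    have : (a:ℝ) = 0 := by
      have hqa : q * a = 0 := by rw [h, hbr, mul_zero]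
      exact (mul_eq_zero.mp hqa).resolve_left hq.ne'
    exact_mod_cast this
  have h3 : a = 0 → b = 0 := by
    intro ha0
    have har0 : (a:ℝ) = 0 := by exact_mod_cast ha0
    have : (b:ℝ) = 0 := by
      have hpb : p * b = 0 := by rw [← h, har0, mul_zero]
      exact (mul_eq_zero.mp hpb).resolve_left hp.ne'
    exact_mod_cast this
  have h4 : 1 ≤ b → b + 1 ≤ a := by
    intro hb1
    have hb1r : (1:ℝ) ≤ b := by exact_mod_cast hb1
    have : (b:ℝ) < a := by nlinarith
    have : b < a := by exact_mod_cast this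
    omega
  refine ⟨hb, h2, h3, h4, fun hab => ?_⟩
  rcases Int.lt_or_le 0 b with hb1 | hb1
  · have := h4 hb1; omega
  · have hb0 : b = 0 := le_antisymm hb1 hb
    exact ⟨h2 hb0, hb0⟩

/-- Any vector `q·e_i ± p·e_j` with `i ≠ j` which is not a column of `A` does not
belong to the lattice `A·ℤⁿ`. -/
theorem qe_pm_pe_not_in_lattice (p q : ℝ) (hq : 0 < q) (hqp : q < p) (n : ℕ) (hn : 2 ≤ n)
    (i j : Fin n) (hij : i ≠ j) (ε : ℝ) (hε : ε = 1 ∨ ε = -1)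
    (hcol : ∀ k : Fin n,
      (q • (Pi.single i 1 : Fin n → ℝ) + (ε * p) • (Pi.single j 1 : Fin n → ℝ)) ≠
        fun l => tilingMatrix p q n l k) :
    q • (Pi.single i 1 : Fin n → ℝ) + (ε * p) • (Pi.single j 1 : Fin n → ℝ) ∉
      latticeA p q n := by
  intro hmem
  obtain ⟨z, hz⟩ := hmem
  haveI : NeZero n := ⟨by omega⟩
  have hp : 0 < p := hq.trans hqp
  -- basic Fin facts
  have hone : (1 : Fin n) ≠ 0 := by
    have hv : ((1:Fin n)).val = 1 := (Fin.val_one' n).trans (Nat.mod_eq_of_lt (by omega))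
    intro h
    rw [h, Fin.val_zero] at hv
    exact absurd hv (by omega)
  have hsub1 : ∀ a : Fin n, a - 1 ≠ a := by
    intro a h; exact hone (sub_eq_self.mp h)
  have hadd1 : ∀ a : Fin n, a + 1 ≠ a := by
    intro a h; exact hone (add_eq_left.mp h)
  -- the componentwise relations
  have R : ∀ l : Fin n,
      (if l = i then q else 0) + (if l = j then ε * p else 0)
        = q * (z l : ℝ) + (if (l:ℕ) = 0 then p else -p) * (z (l-1) : ℝ) := by
    intro l
    have h := congrFun hz l
    simpa [tmAux_mv p q n hn, Pi.single_apply, mul_ite, mul_one, mul_zero] using h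
  -- absolute values
  set f : Fin n → ℤ := fun l => |z l| with hf
  have hfdef : ∀ l, f l = |z l| := fun _ => rfl
  have hfnn : ∀ l, 0 ≤ f l := fun l => abs_nonneg _
  have hfc : ∀ l, ((f l : ℤ) : ℝ) = |(z l : ℝ)| := by
    intro l; rw [hfdef l, Int.cast_abs]
  have hf0 : ∀ l, f l = 0 ↔ z l = 0 := fun l => abs_eq_zero
  have hfpos : ∀ l, z l ≠ 0 → 1 ≤ f l := by
    intro l hzl
    rcases (hfnn l).lt_or_eq with h | h
    · omega
    · exact absurd ((hf0 l).mp h.symm) hzl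
  -- relation at a generic index
  have hA : ∀ l : Fin n, l ≠ i → l ≠ j → q * ((f l : ℤ):ℝ) = p * ((f (l-1) : ℤ):ℝ) := by
    intro l h1 h2
    have h := R l
    rw [if_neg h1, if_neg h2, add_zero] at h
    rw [hfc, hfc]
    have hqz : q * (z l : ℝ) = -((if (l:ℕ) = 0 then p else -p) * (z (l-1) : ℝ)) := by
      linarith
    calc q * |(z l : ℝ)| = |q * (z l : ℝ)| := by
            rw [abs_mul, abs_of_pos hq]
      _ = |(if (l:ℕ) = 0 then p else -p) * (z (l-1) : ℝ)| := by rw [hqz, abs_neg]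
      _ = p * |(z (l-1) : ℝ)| := by
            split_ifs with h0
            · rw [abs_mul, abs_of_pos hp]
            · rw [abs_mul, abs_neg, abs_of_pos hp]
  -- relation at i
  set ai : ℤ := |z i - 1| with hai
  have haidef : ai = |z i - 1| := rfl
  have haic : ((ai : ℤ) : ℝ) = |(z i : ℝ) - 1| := by
    rw [haidef, Int.cast_abs]; push_cast; ring_nf
  have hIr : q * ((ai : ℤ):ℝ) = p * ((f (i-1) : ℤ):ℝ) := by
    have h := R i
    rw [if_pos rfl, if_neg hij, add_zero] at h
    rw [haic, hfc]
    have hqz : q * ((z i : ℝ) - 1)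
        = -((if (i:ℕ) = 0 then p else -p) * (z (i-1) : ℝ)) := by
      linear_combination -h
    calc q * |(z i : ℝ) - 1| = |q * ((z i : ℝ) - 1)| := by rw [abs_mul, abs_of_pos hq]
      _ = |(if (i:ℕ) = 0 then p else -p) * (z (i-1) : ℝ)| := by rw [hqz, abs_neg]
      _ = p * |(z (i-1) : ℝ)| := by
            split_ifs with h0
            · rw [abs_mul, abs_of_pos hp]
            · rw [abs_mul, abs_neg, abs_of_pos hp]
  have hainn : 0 ≤ ai := abs_nonneg _
  -- sign bookkeeping at j
  obtain ⟨s, hs1, hs2⟩ : ∃ s : ℤ, (s = 1 ∨ s = -1) ∧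
      (if (j:ℕ) = 0 then p else -p) = -((s:ℤ):ℝ) * p := by
    by_cases hj0 : (j:ℕ) = 0
    · exact ⟨-1, Or.inr rfl, by rw [if_pos hj0]; push_cast; ring⟩
    · exact ⟨1, Or.inl rfl, by rw [if_neg hj0]; push_cast; ring⟩
  obtain ⟨e, he1, he2⟩ : ∃ e : ℤ, (e = 1 ∨ e = -1) ∧ ((e:ℤ):ℝ) = ε := by
    rcases hε with h | h
    · exact ⟨1, Or.inl rfl, by rw [h]; push_cast; ring⟩
    · exact ⟨-1, Or.inr rfl, by rw [h]; push_cast; ring⟩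
  set g : ℤ := |e + s * z (j-1)| with hg
  have hgdef : g = |e + s * z (j-1)| := rfl
  have hgnn : 0 ≤ g := abs_nonneg _
  have hJr : q * ((f j : ℤ):ℝ) = p * ((g : ℤ):ℝ) := by
    have h := R j
    rw [if_pos rfl, if_neg (Ne.symm hij), zero_add, hs2] at h
    have hqz : q * (z j : ℝ) = p * (((e + s * z (j-1) : ℤ):ℝ)) := by
      push_cast
      rw [← he2] at h
      push_cast at h
      linear_combination -h
    rw [hfc, hgdef, Int.cast_abs]
    calc q * |(z j : ℝ)| = |q * (z j : ℝ)| := by rw [abs_mul, abs_of_pos hq]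
      _ = |p * (((e + s * z (j-1) : ℤ):ℝ))| := by rw [hqz]
      _ = p * |((e + s * z (j-1) : ℤ):ℝ)| := by rw [abs_mul, abs_of_pos hp]
  -- bounds for g
  have hgbd : f (j-1) - 1 ≤ g ∧ g ≤ f (j-1) + 1 := by
    rcases abs_cases (e + s * z (j-1)) with ⟨h1, _⟩ | ⟨h1, _⟩ <;>
    rcases abs_cases (z (j-1)) with ⟨h2, _⟩ | ⟨h2, _⟩ <;>
    rcases hs1 with rfl | rfl <;> rcases he1 with rfl | rfl <;>
      (rw [hgdef, h1, hfdef, h2]; omega)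
  -- z i is never 0
  have hfacts_i := tmAux_qpFacts p q hq hqp ai (f (i-1)) hainn hIr
  have hzi : z i ≠ 0 := by
    intro h0
    have hai1 : ai = 1 := by rw [haidef, h0]; decide
    rcases hfacts_i with ⟨hb, h2, _, h4, _⟩
    rcases Int.lt_or_le 0 (f (i-1)) with hb1 | hb1
    · have := h4 hb1; omega
    · have hb0 : f (i-1) = 0 := le_antisymm hb1 hb
      have := h2 hb0; omega
  have hfi1 : 1 ≤ f i := hfpos i hzi
  -- |z i| and |z i - 1| differ by at most 1
  have haif : ai ≤ f i + 1 ∧ f i ≤ ai + 1 := by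
    rcases abs_cases (z i - 1) with ⟨h1, _⟩ | ⟨h1, _⟩ <;>
    rcases abs_cases (z i) with ⟨h2, _⟩ | ⟨h2, _⟩ <;>
      (rw [haidef, h1, hfdef, h2]; omega)
  -- the cyclic differences
  set d : Fin n → ℤ := fun l => f l - f (l-1) with hd
  have hddef : ∀ l, d l = f l - f (l-1) := fun _ => rfl
  have hsum : ∑ l, d l = 0 := by
    have hre : ∑ l : Fin n, f (l - 1) = ∑ l : Fin n, f l :=
      (Equiv.subRight (1:Fin n)).sum_comp f
    calc ∑ l, d l = ∑ l : Fin n, (f l - f (l-1)) := rfl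
      _ = ∑ l : Fin n, f l - ∑ l : Fin n, f (l-1) := Finset.sum_sub_distrib _ _
      _ = 0 := by rw [hre, sub_self]
  -- nonnegativity away from j
  have hd0 : ∀ l : Fin n, l ≠ j → 0 ≤ d l := by
    intro l hlj
    rw [hddef]
    by_cases hli : l = i
    · subst hli
      by_cases hz0 : z (l-1) = 0
      · have h0 : f (l-1) = 0 := (hf0 _).mpr hz0
        have := hfnn l; omega
      · have hb1 : 1 ≤ f (l-1) := hfpos _ hz0
        have h4 := (tmAux_qpFacts p q hq hqp ai (f (l-1)) hainn hIr).2.2.2.1 hb1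
        have := haif.2
        omega
    · have hfacts := tmAux_qpFacts p q hq hqp (f l) (f (l-1)) (hfnn l) (hA l hli hlj)
      by_cases hz0 : z (l-1) = 0
      · have hb0 : f (l-1) = 0 := (hf0 _).mpr hz0
        have := hfacts.2.1 hb0
        omega
      · have hb1 : 1 ≤ f (l-1) := hfpos _ hz0
        have := hfacts.2.2.2.1 hb1
        omega
  rcases Int.lt_or_le (d j) 0 with hdj | hdj
  -- CASE 2 : d j < 0
  · have hfacts_j := tmAux_qpFacts p q hq hqp (f j) g (hfnn j) hJr
    have hdj' : f j < f (j-1) := by rw [hddef] at hdj; omega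
    have hb1 : 1 ≤ f (j-1) := by have := hfnn j; omega
    have hglt : g < f (j-1) := by
      by_contra hge
      push_neg at hge
      have hg1 : 1 ≤ g := by omega
      have := hfacts_j.2.2.2.1 hg1
      omega
    have hg0 : g = 0 := by
      by_contra hgne
      have hg1 : 1 ≤ g := by omega
      have h4 := hfacts_j.2.2.2.1 hg1
      have := hgbd.1
      omega
    have hfjm1 : f (j-1) = 1 := by
      have := hgbd.1; omega
    have hfj0 : f j = 0 := hfacts_j.2.1 hg0
    have hzj : z j = 0 := (hf0 j).mp hfj0
    have hes : e + s * z (j-1) = 0 := by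
      have := hgdef.symm.trans hg0
      exact abs_eq_zero.mp this
    have hdjv : d j = -1 := by rw [hddef]; omega
    -- sum over the complement of j equals 1
    have hS : ∑ l ∈ Finset.univ.erase j, d l = 1 := by
      have h := Finset.sum_erase_add Finset.univ d (Finset.mem_univ j)
      rw [hsum, hdjv] at h
      omega
    have hdnn : ∀ l ∈ Finset.univ.erase j, 0 ≤ d l := by
      intro l hl; exact hd0 l (Finset.ne_of_mem_erase hl)
    have hpair : ∀ a b : Fin n, a ≠ b → a ≠ j → b ≠ j → d a + d b ≤ 1 := by
      intro a b hab haj hbj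
      have hsub : ({a, b} : Finset (Fin n)) ⊆ Finset.univ.erase j := by
        intro x hx
        simp only [Finset.mem_insert, Finset.mem_singleton] at hx
        rcases hx with rfl | rfl <;> exact Finset.mem_erase.mpr ⟨‹_›, Finset.mem_univ _⟩
      have h2 := Finset.sum_le_sum_of_subset_of_nonneg hsub fun x hx _ => hdnn x hx
      rw [Finset.sum_pair hab, hS] at h2
      exact h2
    by_cases hz0 : z (i-1) = 0
    · -- the main branch : here the vector must be a column of A
      have hb0 : f (i-1) = 0 := (hf0 _).mpr hz0
      have hzi1 : z i = 1 := by
        have h := R i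
        rw [if_pos rfl, if_neg hij, add_zero, hz0] at h
        push_cast at h
        have h1 : q * 1 = q * (z i : ℝ) := by linarith
        have := mul_left_cancel₀ hq.ne' h1
        exact_mod_cast this.symm
      have hfi_eq : f i = 1 := by rw [hfdef, hzi1]; decide
      have hdi : d i = 1 := by rw [hddef]; omega
      -- j must be the cyclic successor of i
      have hji : j = i + 1 := by
        by_contra hne
        have hii : i + 1 ≠ i := hadd1 i
        have hij' : i + 1 ≠ j := fun h => hne h.symm
        have hd1 : d (i+1) = 0 := by
          have hp1 := hpair i (i+1) (Ne.symm hii) hij hij'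
          have h0 := hd0 (i+1) hij'
          omega
        have hAx := hA (i+1) hii hij'
        have hsimp : (i+1) - 1 = i := add_sub_cancel_right i 1
        rw [hsimp] at hAx
        have hfeq : f (i+1) = f i := by
          have := hddef (i+1); rw [hsimp] at this; omega
        rw [hfeq, hfi_eq] at hAx
        push_cast at hAx
        linarith
      have hjm : j - 1 = i := by rw [hji]; exact add_sub_cancel_right i 1
      have hzjm : z (j-1) = 1 := by rw [hjm]; exact hzi1
      have hes2 : e = -s := by rw [hzjm, mul_one] at hes; omega
      -- the vector equals column i of A
      refine absurd (funext fun l => ?_) (hcol i)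
      rw [tmAux_entry p q n hn l i]
      simp only [Pi.add_apply, Pi.smul_apply, Pi.single_apply, smul_eq_mul, mul_ite,
        mul_one, mul_zero]
      by_cases hli : l = i
      · rw [if_pos hli, if_neg (fun h : l = j => hij (hli.symm.trans h)), if_pos hli.symm,
          if_neg (fun h : i = l - 1 => hsub1 l (by rw [← h, hli]))]
      · by_cases hlj : l = j
        · have hc1 : i = l - 1 := by rw [hlj, hjm]
          rw [if_neg hli, if_pos hlj, if_neg (fun h : i = l => hli h.symm),
            if_pos hc1, hlj, hs2, ← he2, hes2]
          push_cast
          ring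
        · have hc2 : i ≠ l - 1 := fun h => hlj (by rw [sub_eq_iff_eq_add.mp h.symm]; exact hji.symm)
          rw [if_neg hli, if_neg hlj, if_neg (fun h : i = l => hli h.symm), if_neg hc2]
    · -- impossible branch : two strictly increasing steps
      have him1j : i - 1 ≠ j := fun h => hz0 (by rw [h]; exact hzj)
      have him1i : i - 1 ≠ i := hsub1 i
      have hb1' : 1 ≤ f (i-1) := hfpos _ hz0
      have hA1 := hA (i-1) him1i him1j
      have hfacts1 := tmAux_qpFacts p q hq hqp (f (i-1)) (f (i-1-1)) (hfnn _) hA1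
      have hb2 : 1 ≤ f (i-1-1) := by
        rcases Int.lt_or_le 0 (f (i-1-1)) with h | h
        · omega
        · have h0 : f (i-1-1) = 0 := le_antisymm h (hfnn _)
          have := hfacts1.2.1 h0
          omega
      have hdi1 : 1 ≤ d (i-1) := by
        have := hfacts1.2.2.2.1 hb2
        rw [hddef]; omega
      have hdi0 : 0 ≤ d i := hd0 i hij
      have hpair1 := hpair i (i-1) (Ne.symm him1i) hij him1j
      have hdi_eq : d i = 0 := by omega
      have hdi1_eq : d (i-1) = 1 := by omega
      have hfieq : f i = f (i-1) := by have := hddef i; omega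
      have hstep : f (i-1) = f (i-1-1) + 1 := by have := hddef (i-1); omega
      have hai_eq : ai = f i + 1 := by
        have h4 := hfacts_i.2.2.2.1 (by omega : 1 ≤ f (i-1))
        have := haif.1
        omega
      have E1 : q * ((f (i-1-1) : ℝ) + 2) = p * ((f (i-1-1) : ℝ) + 1) := by
        have h := hIr
        rw [hai_eq, hfieq, hstep] at h
        push_cast at h
        linarith
      have E2 : q * ((f (i-1-1) : ℝ) + 1) = p * (f (i-1-1) : ℝ) := by
        have h := hA1
        rw [hstep] at h
        push_cast at h
        linarith
      linarith
  -- CASE 1 : d j ≥ 0, so all differences vanish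
  · have hall : ∀ l : Fin n, d l = 0 := by
      have h := (Finset.sum_eq_zero_iff_of_nonneg ?_).mp hsum
      · intro l; exact h l (Finset.mem_univ l)
      · intro l _
        by_cases hlj : l = j
        · subst hlj; exact hdj
        · exact hd0 l hlj
    by_cases hz0 : z (i-1) = 0
    · have hb0 : f (i-1) = 0 := (hf0 _).mpr hz0
      have := hall i
      rw [hddef] at this
      omega
    · have hb1 : 1 ≤ f (i-1) := hfpos _ hz0
      by_cases hij1 : i - 1 = j
      · -- equality analysis at i and j
        have hdieq : f i = f (i-1) := by have := hall i; rw [hddef] at this; omega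
        have hdjeq : f j = f (j-1) := by have := hall j; rw [hddef] at this; omega
        have hfij : f (i-1) = f j := by rw [hij1]
        have hai_eq : ai = f i + 1 := by
          have h4 := hfacts_i.2.2.2.1 hb1
          have := haif.1
          omega
        have hfifj : f i = f j := hdieq.trans hfij
        have E1 : q * ((f j : ℝ) + 1) = p * (f j : ℝ) := by
          have h := hIr
          rw [hai_eq, hfifj, hfij] at h
          push_cast at h
          linarith
        have hfacts_j := tmAux_qpFacts p q hq hqp (f j) g (hfnn j) hJr
        have hfj1 : 1 ≤ f j := by omega
        have hgub : ¬ (f j ≤ g) := by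
          intro hle
          have := hfacts_j.2.2.2.2 hle
          omega
        have hgeq : g = f j - 1 := by
          have := hgbd.1
          omega
        have E2 : q * (f j : ℝ) = p * ((f j : ℝ) - 1) := by
          have h := hJr
          rw [hgeq] at h
          push_cast at h
          linarith
        linarith
      · -- i-1 is a generic index with d = 0, hence z (i-1) = 0
        have him1i : i - 1 ≠ i := hsub1 i
        have hfacts := tmAux_qpFacts p q hq hqp (f (i-1)) (f (i-1-1)) (hfnn _)
          (hA (i-1) him1i hij1)
        have hdeq : f (i-1) = f (i-1-1) := by
          have := hall (i-1); rw [hddef] at this; omega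
        have := hfacts.2.2.2.2 (le_of_eq hdeq)
        omega
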